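/- Pool adjacent violators merging is valid: if y_i ≥ y_{i+1}, then the isotonic regression of y equals the isotonic regression of the problem where coordinates i and i+1 are constrained to be equal. Equivalently, the optimal fit satisfies x*_i = x*_{i+1} whenever y_i ≥ y_{i+1}. -/

import Mathlib

lemma mono_update {d : ℕ} (x : Fin d → ℝ) (hx : Monotone x) (k : Fin d) (c : ℝ)
    (h1 : ∀ j, j < k → x j ≤ c) (h2 : ∀ j, k < j → c ≤ x j) :
    Monotone (Function.update x k c) := by
  intro a b hab
  rcases eq_or_lt_of_le hab with rfl | h
  · exact le_rfl
  by_cases ha : a = k <;> by_cases hb : b = k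
  · exact absurd (ha ▸ hb ▸ rfl) h.ne
  · subst ha
    rw [Function.update_self, Function.update_of_ne hb]
    exact h2 b h
  · subst hb
    rw [Function.update_self, Function.update_of_ne ha]
    exact h1 a h
  · rw [Function.update_of_ne ha, Function.update_of_ne hb]
    exact hx hab

lemma better_update {d : ℕ} (y x : Fin d → ℝ)
    (hmin : ∀ v : Fin d → ℝ, Monotone v →
      ∑ i, (x i - y i)^2 ≤ ∑ i, (v i - y i)^2)
    (k : Fin d) (c : ℝ) (hc : (c - y k)^2 < (x k - y k)^2)
    (hm : Monotone (Function.update x k c)) : False := by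
  have h := hmin _ hm
  have hpt : ∀ j, (Function.update x k c j - y j)^2 =
      Function.update (fun j => (x j - y j)^2) k ((c - y k)^2) j := by
    intro j
    by_cases hj : j = k
    · subst hj; simp
    · rw [Function.update_of_ne hj, Function.update_of_ne hj]
  rw [Finset.sum_congr rfl (fun j _ => hpt j)] at h
  rw [Finset.sum_update_of_mem (Finset.mem_univ k)] at h
  rw [← Finset.add_sum_erase Finset.univ (fun j => (x j - y j)^2) (Finset.mem_univ k),
    Finset.sdiff_singleton_eq_erase] at h
  linarith

theorem stmt16 {d : ℕ} (y x : Fin d → ℝ) (hx : Monotone x)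
    (hmin : ∀ v : Fin d → ℝ, Monotone v →
      ∑ i, (x i - y i)^2 ≤ ∑ i, (v i - y i)^2)
    (i : Fin d) (hi : (i : ℕ) + 1 < d) (hy : y ⟨(i : ℕ) + 1, hi⟩ ≤ y i) :
    x i = x ⟨(i : ℕ) + 1, hi⟩ := by
  set i1 : Fin d := ⟨(i : ℕ) + 1, hi⟩ with hi1
  have hle : x i ≤ x i1 := hx (Fin.le_def.mpr (show (i:ℕ) ≤ (i:ℕ) + 1 by omega))
  by_contra hne
  have hlt : x i < x i1 := lt_of_le_of_ne hle hne
  by_cases hcase : x i < y i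
  · -- move x i up to min (y i) (x i1)
    set c := min (y i) (x i1) with hc
    have hxc : x i < c := lt_min hcase hlt
    have hmono : Monotone (Function.update x i c) := by
      refine mono_update x hx i c (fun j hj => ?_) (fun j hj => ?_)
      · exact le_trans (hx hj.le) hxc.le
      · exact le_trans (min_le_right _ _) (hx (show i1 ≤ j from Fin.le_def.mpr (by have : (i:ℕ) < (j:ℕ) := hj; simpa [hi1] using this)))
    refine better_update y x hmin i c ?_ hmono
    have hcy : c ≤ y i := min_le_left _ _
    nlinarith
  · -- move x i1 down to max (y i1) (x i)
    push_neg at hcase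
    set c := max (y i1) (x i) with hc
    have hxc : c < x i1 := max_lt (lt_of_le_of_lt (le_trans hy hcase) hlt) hlt
    have hmono : Monotone (Function.update x i1 c) := by
      refine mono_update x hx i1 c (fun j hj => ?_) (fun j hj => ?_)
      · have hj' : (j : ℕ) < (i : ℕ) + 1 := hj
        exact le_trans (hx (show j ≤ i from Fin.le_def.mpr (by omega))) (le_max_right _ _)
      · exact le_trans hxc.le (hx hj.le)
    refine better_update y x hmin i1 c ?_ hmono
    have hcy : y i1 ≤ c := le_max_left _ _
    nlinarith
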